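/- Define P_{(2,1)}(n) := ∑_{j=-∞}^{∞} q^{10j^2+j} [2n choose n-5j]_q − ∑_{j=-∞}^{∞} q^{10j^2+11j+3} [2n choose n-5j-3]_q. Then P_{(2,1)}(n) satisfies the recurrence P_{(2,1)}(n) = (1 + q^{2n-1} + q^{2n-2}) P_{(2,1)}(n-1) − q^{4n-5} P_{(2,1)}(n-2) for n ≥ 2, with P_{(2,1)}(0) = 1 and P_{(2,1)}(1) = 1 + q. -/

import Mathlib

open Finset

noncomputable section

abbrev F := RatFunc ℚ

/-- The variable `q`, a transcendental element. -/
def q : F := RatFunc.X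

/-- `(b;b)_n = ∏_{i=1}^n (1 - b^i)` -/
def pq (b : F) (n : ℕ) : F := ∏ i ∈ Finset.range n, (1 - b ^ (i + 1))

/-- Gaussian binomial coefficient in base `b`, zero when `k < 0` or `k > a`. -/
def qbin (b : F) (a k : ℤ) : F :=
  if 0 ≤ k ∧ k ≤ a then pq b a.toNat / (pq b k.toNat * pq b (a - k).toNat) else 0

/-- Primed Gaussian binomial: equals 1 when `a < 0` and `k = 0`. -/
def qbin' (b : F) (a k : ℤ) : F :=
  if a < 0 ∧ k = 0 then 1 else qbin b a k

/-- The cylindric partition polynomial `P_{(2,1)}(n)`. -/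
def P21 (n : ℕ) : F :=
  (∑ᶠ j : ℤ, q ^ (10 * j ^ 2 + j) * qbin q (2 * (n : ℤ)) ((n : ℤ) - 5 * j)) -
    ∑ᶠ j : ℤ, q ^ (10 * j ^ 2 + 11 * j + 3) * qbin q (2 * (n : ℤ)) ((n : ℤ) - 5 * j - 3)

lemma q_ne_zero : q ≠ 0 := RatFunc.X_ne_zero

lemma one_sub_q_pow_ne_zero (m : ℕ) (hm : 1 ≤ m) : (1 : F) - q ^ m ≠ 0 := by
  have hinj := IsFractionRing.injective (Polynomial ℚ) F
  intro h
  have hq : (q : F) = algebraMap (Polynomial ℚ) F Polynomial.X := (RatFunc.algebraMap_X).symm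
  have : algebraMap (Polynomial ℚ) F (1 - Polynomial.X ^ m) = algebraMap (Polynomial ℚ) F 0 := by
    simpa [map_sub, map_pow, ← hq, sub_eq_zero] using h
  have h2 : (1 - Polynomial.X ^ m : Polynomial ℚ) = 0 := hinj this
  have := congrArg (fun p => Polynomial.coeff p m) h2
  simp only [Polynomial.coeff_one, Polynomial.coeff_X_pow, Polynomial.coeff_sub,
    Polynomial.coeff_zero] at this
  simp only [if_neg (show ¬ m=0 by omega)] at this
  norm_num at this

lemma pq_ne_zero (n : ℕ) : pq q n ≠ 0 := by
  unfold pq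
  rw [Finset.prod_ne_zero_iff]
  intro i _
  exact one_sub_q_pow_ne_zero (i+1) (by omega)

lemma pq_succ (n : ℕ) : pq q (n + 1) = pq q n * (1 - q ^ (n + 1)) := Finset.prod_range_succ _ _

/-- `q` to an integer power, kept opaque for `ring`. -/
def Qp (e : ℤ) : F := q ^ e

lemma Qp_mul (x y : ℤ) : Qp x * Qp y = Qp (x + y) := (zpow_add₀ q_ne_zero x y).symm

lemma qbin_out {m k : ℤ} (h : ¬ (0 ≤ k ∧ k ≤ m)) : qbin q m k = 0 := if_neg h

lemma qbin_in {m k : ℤ} (h1 : 0 ≤ k) (h2 : k ≤ m) :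
    qbin q m k = pq q m.toNat / (pq q k.toNat * pq q (m-k).toNat) := if_pos ⟨h1, h2⟩

lemma pq_zero : pq q 0 = 1 := Finset.prod_range_zero _

lemma qbin_zero_right {m : ℤ} (h : 0 ≤ m) : qbin q m 0 = 1 := by
  rw [qbin_in le_rfl h]
  simp [pq_zero, div_self (pq_ne_zero _)]

lemma qbin_self {m : ℤ} (h : 0 ≤ m) : qbin q m m = 1 := by
  rw [qbin_in h le_rfl]
  rw [show m - m = 0 by ring]
  simp [pq_zero, div_self (pq_ne_zero _)]

lemma midA (K D : ℕ) :
    pq q (K+D+2) / (pq q (K+1) * pq q (D+1))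
      = pq q (K+D+1) / (pq q (K+1) * pq q D)
        + q ^ (D+1) * (pq q (K+D+1) / (pq q K * pq q (D+1))) := by
  have e1 : pq q (K+D+2) = pq q (K+D+1) * (1 - q^(K+D+2)) := by
    rw [show K+D+2 = (K+D+1)+1 by ring]; exact pq_succ _
  have e2 : pq q (K+1) = pq q K * (1 - q^(K+1)) := pq_succ _
  have e3 : pq q (D+1) = pq q D * (1 - q^(D+1)) := pq_succ _
  have h1 := pq_ne_zero K
  have h2 := pq_ne_zero D
  have h3 := pq_ne_zero (K+D+1)
  have h4 := one_sub_q_pow_ne_zero (K+1) (by omega)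
  have h5 := one_sub_q_pow_ne_zero (D+1) (by omega)
  rw [e1, e2, e3]
  field_simp
  ring

lemma midB (K D : ℕ) :
    pq q (K+D+2) / (pq q (K+1) * pq q (D+1))
      = q ^ (K+1) * (pq q (K+D+1) / (pq q (K+1) * pq q D))
        + pq q (K+D+1) / (pq q K * pq q (D+1)) := by
  have e1 : pq q (K+D+2) = pq q (K+D+1) * (1 - q^(K+D+2)) := by
    rw [show K+D+2 = (K+D+1)+1 by ring]; exact pq_succ _
  have e2 : pq q (K+1) = pq q K * (1 - q^(K+1)) := pq_succ _
  have e3 : pq q (D+1) = pq q D * (1 - q^(D+1)) := pq_succ _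
  have h1 := pq_ne_zero K
  have h2 := pq_ne_zero D
  have h3 := pq_ne_zero (K+D+1)
  have h4 := one_sub_q_pow_ne_zero (K+1) (by omega)
  have h5 := one_sub_q_pow_ne_zero (D+1) (by omega)
  rw [e1, e2, e3]
  field_simp
  ring

lemma midRel (K D : ℕ) :
    (1 - q^(K+1)) * (pq q (K+D+1) / (pq q (K+1) * pq q D))
      = (1 - q^(D+1)) * (pq q (K+D+1) / (pq q K * pq q (D+1))) := by
  have e2 : pq q (K+1) = pq q K * (1 - q^(K+1)) := pq_succ _
  have e3 : pq q (D+1) = pq q D * (1 - q^(D+1)) := pq_succ _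
  have h1 := pq_ne_zero K
  have h2 := pq_ne_zero D
  have h3 := pq_ne_zero (K+D+1)
  have h4 := one_sub_q_pow_ne_zero (K+1) (by omega)
  have h5 := one_sub_q_pow_ne_zero (D+1) (by omega)
  rw [e2, e3]
  field_simp

lemma qbin_pascalA (m k : ℤ) (hm : 1 ≤ m) :
    qbin q m k = qbin q (m-1) k + Qp (m-k) * qbin q (m-1) (k-1) := by
  show qbin q m k = qbin q (m-1) k + q ^ (m-k) * qbin q (m-1) (k-1)
  rcases lt_trichotomy k 0 with hk | hk | hk
  · rw [qbin_out (by omega), qbin_out (by omega), qbin_out (by omega)]; ring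
  · subst hk
    rw [qbin_zero_right (by omega), qbin_zero_right (by omega), qbin_out (by omega)]; ring
  · rcases lt_trichotomy k m with hkm | hkm | hkm
    · set K := (k-1).toNat with hKdef
      set D := (m-k-1).toNat with hDdef
      rw [qbin_in (by omega) (by omega), qbin_in (by omega) (by omega),
        qbin_in (by omega) (by omega)]
      rw [show m.toNat = K+D+2 by omega, show k.toNat = K+1 by omega,
        show (m-k).toNat = D+1 by omega, show (m-1).toNat = K+D+1 by omega,
        show (m-1-k).toNat = D by omega, show (k-1).toNat = K by omega,
        show (m-1-(k-1)).toNat = D+1 by omega]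
      rw [show m-k = ((D+1 : ℕ) : ℤ) by omega, zpow_natCast]
      exact midA K D
    · subst hkm
      rw [qbin_self (by omega), qbin_out (by omega), qbin_self (by omega)]
      rw [show k-k = (0:ℤ) by ring, zpow_zero]; ring
    · rw [qbin_out (by omega), qbin_out (by omega), qbin_out (by omega)]; ring

lemma qbin_pascalB (m k : ℤ) (hm : 1 ≤ m) :
    qbin q m k = Qp k * qbin q (m-1) k + qbin q (m-1) (k-1) := by
  show qbin q m k = q ^ k * qbin q (m-1) k + qbin q (m-1) (k-1)
  rcases lt_trichotomy k 0 with hk | hk | hk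
  · rw [qbin_out (by omega), qbin_out (by omega), qbin_out (by omega)]; ring
  · subst hk
    rw [qbin_zero_right (by omega), qbin_zero_right (by omega), qbin_out (by omega),
      zpow_zero]; ring
  · rcases lt_trichotomy k m with hkm | hkm | hkm
    · set K := (k-1).toNat with hKdef
      set D := (m-k-1).toNat with hDdef
      rw [qbin_in (by omega) (by omega), qbin_in (by omega) (by omega),
        qbin_in (by omega) (by omega)]
      rw [show m.toNat = K+D+2 by omega, show k.toNat = K+1 by omega,
        show (m-k).toNat = D+1 by omega, show (m-1).toNat = K+D+1 by omega,
        show (m-1-k).toNat = D by omega, show (k-1).toNat = K by omega,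
        show (m-1-(k-1)).toNat = D+1 by omega]
      rw [show k = ((K+1 : ℕ) : ℤ) by omega, zpow_natCast]
      exact midB K D
    · subst hkm
      rw [qbin_self (by omega), qbin_out (by omega), qbin_self (by omega)]
      ring
    · rw [qbin_out (by omega), qbin_out (by omega), qbin_out (by omega)]; ring

lemma qbin_rel (m k : ℤ) :
    (1 - Qp k) * qbin q m k = (1 - Qp (m+1-k)) * qbin q m (k-1) := by
  show (1 - q ^ k) * qbin q m k = (1 - q ^ (m+1-k)) * qbin q m (k-1)
  rcases lt_trichotomy k 0 with hk | hk | hk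
  · rw [qbin_out (by omega), qbin_out (by omega)]; ring
  · subst hk
    rw [qbin_out (show ¬ (0 ≤ (0:ℤ)-1 ∧ (0:ℤ)-1 ≤ m) by omega), zpow_zero]; ring
  · rcases le_or_gt k m with hkm | hkm
    · set K := (k-1).toNat with hKdef
      set D := (m-k).toNat with hDdef
      rw [qbin_in (by omega) (by omega), qbin_in (by omega) (by omega)]
      rw [show m.toNat = K+D+1 by omega, show k.toNat = K+1 by omega,
        show (m-k).toNat = D by omega, show (k-1).toNat = K by omega,
        show (m-(k-1)).toNat = D+1 by omega]
      rw [show k = ((K+1 : ℕ) : ℤ) by omega, show m+1-((K+1:ℕ):ℤ) = ((D+1 : ℕ) : ℤ) by omega,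
        zpow_natCast, zpow_natCast]
      exact midRel K D
    · rcases eq_or_lt_of_le (by omega : m + 1 ≤ k) with hk1 | hk1
      · rw [qbin_out (by omega), show m+1-k = (0:ℤ) by omega, zpow_zero]; ring
      · rw [qbin_out (by omega), qbin_out (by omega)]; ring

lemma qbin_symm (m k : ℤ) : qbin q m k = qbin q m (m-k) := by
  rcases lt_or_ge m 0 with hm | hm
  · rw [qbin_out (by omega), qbin_out (by omega)]
  · by_cases h : 0 ≤ k ∧ k ≤ m
    · rw [qbin_in h.1 h.2, qbin_in (by omega) (by omega),
        show m - (m-k) = k by ring, mul_comm]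
    · rw [qbin_out h, qbin_out (by omega)]

/-- The bilateral sum `S m r a b = Σ_j q^{10j²+aj+b} [m, r-5j]_q`. -/
def S (m r a b : ℤ) : F := ∑ᶠ j : ℤ, Qp (10*j^2 + a*j + b) * qbin q m (r - 5*j)

lemma S_support_finite (m r : ℤ) (c : ℤ → F) :
    (Function.support fun j : ℤ => c j * qbin q m (r - 5*j)).Finite := by
  apply Set.Finite.subset (Set.finite_Icc (-(|r|+|m|)) (|r|+|m|))
  intro j hj
  rw [Function.mem_support] at hj
  have h : ¬ (qbin q m (r-5*j) = 0) := fun h => hj (by rw [h, mul_zero])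
  have h2 : 0 ≤ r - 5*j ∧ r - 5*j ≤ m := by
    by_contra hc; exact h (qbin_out hc)
  simp only [Set.mem_Icc]
  rcases abs_cases r with ⟨h3,h4⟩|⟨h3,h4⟩ <;> rcases abs_cases m with ⟨h5,h6⟩|⟨h5,h6⟩ <;>
    constructor <;> omega

lemma finsum_shift (f : ℤ → F) (d : ℤ) : ∑ᶠ j : ℤ, f (j + d) = ∑ᶠ j : ℤ, f j := by
  have := finsum_comp_equiv (Equiv.addRight d) (f := f)
  simpa using this

lemma finsum_neg (f : ℤ → F) : ∑ᶠ j : ℤ, f (-j) = ∑ᶠ j : ℤ, f j := by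
  have := finsum_comp_equiv (Equiv.neg ℤ) (f := f)
  simpa using this

lemma S_pascalA (m r a b m' r' a' b' : ℤ) (hm : 1 ≤ m) (h1 : m' = m-1) (h2 : r' = r-1)
    (h3 : a' = a+5) (h4 : b' = b+m-r) : S m r a b = S m' r a b + S m' r' a' b' := by
  subst h1 h2 h3 h4
  unfold S
  rw [← finsum_add_distrib (S_support_finite _ _ _) (S_support_finite _ _ _)]
  apply finsum_congr; intro j
  rw [qbin_pascalA m (r-5*j) hm, mul_add]
  congr 1
  rw [← mul_assoc, Qp_mul, show 10*j^2+a*j+b + (m-(r-5*j)) = 10*j^2+(a+5)*j+(b+m-r) by ring,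
    show r-5*j-1 = (r-1)-5*j by ring]

lemma S_pascalB (m r a b m' r' a' b' : ℤ) (hm : 1 ≤ m) (h1 : m' = m-1) (h2 : r' = r-1)
    (h3 : a' = a-5) (h4 : b' = b+r) : S m r a b = S m' r a' b' + S m' r' a b := by
  subst h1 h2 h3 h4
  unfold S
  rw [← finsum_add_distrib (S_support_finite _ _ _) (S_support_finite _ _ _)]
  apply finsum_congr; intro j
  rw [qbin_pascalB m (r-5*j) hm, mul_add]
  congr 1
  · rw [← mul_assoc, Qp_mul, show 10*j^2+a*j+b + (r-5*j) = 10*j^2+(a-5)*j+(b+r) by ring]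
  · rw [show r-5*j-1 = (r-1)-5*j by ring]

lemma S_rel (m r a b a₂ b₂ a₃ b₃ r' : ℤ) (h1 : a₂ = a+5) (h2 : b₂ = b+m+1-r)
    (h3 : a₃ = a-5) (h4 : b₃ = b+r) (h5 : r' = r-1) :
    S m r a b + S m r' a₂ b₂ = S m r a₃ b₃ + S m r' a b := by
  subst h1 h2 h3 h4 h5
  unfold S
  rw [← finsum_add_distrib (S_support_finite _ _ _) (S_support_finite _ _ _),
    ← finsum_add_distrib (S_support_finite _ _ _) (S_support_finite _ _ _)]
  apply finsum_congr; intro j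
  have key : ∀ (X Y c d e : F), (1-c)*X = (1-d)*Y → e*X + (e*d)*Y = (e*c)*X + e*Y := by
    intro X Y c d e h; linear_combination e*h
  have h := key (qbin q m (r-5*j)) (qbin q m (r-5*j-1)) (Qp (r-5*j)) (Qp (m+1-(r-5*j)))
    (Qp (10*j^2+a*j+b)) (qbin_rel m (r-5*j))
  rw [Qp_mul, Qp_mul, show 10*j^2+a*j+b + (m+1-(r-5*j)) = 10*j^2+(a+5)*j+(b+m+1-r) by ring,
    show 10*j^2+a*j+b + (r-5*j) = 10*j^2+(a-5)*j+(b+r) by ring,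
    show r-5*j-1 = (r-1)-5*j by ring] at h
  exact h

lemma S_mul (e m r a b b' : ℤ) (h : b' = b + e) : Qp e * S m r a b = S m r a b' := by
  subst h
  unfold S
  rw [mul_finsum _ _]
  apply finsum_congr; intro j
  rw [← mul_assoc, Qp_mul, show e + (10*j^2+a*j+b) = 10*j^2+a*j+(b+e) by ring]

lemma S_symm (m r a b r' a' : ℤ) (h1 : r' = m - r) (h2 : a' = -a) : S m r a b = S m r' a' b := by
  subst h1 h2
  unfold S
  calc ∑ᶠ j : ℤ, Qp (10*j^2 + a*j + b) * qbin q m (r - 5*j)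
      = ∑ᶠ j : ℤ, (fun i : ℤ => Qp (10*i^2 + (-a)*i + b) * qbin q m ((m-r) - 5*i)) (-j) := by
        apply finsum_congr; intro j
        show Qp (10*j^2 + a*j + b) * qbin q m (r - 5*j)
          = Qp (10*(-j)^2 + (-a)*(-j) + b) * qbin q m ((m-r) - 5*(-j))
        rw [qbin_symm m (r-5*j), show m-(r-5*j) = (m-r)-5*(-j) by ring,
          show 10*(-j)^2 + (-a)*(-j) + b = 10*j^2 + a*j + b by ring]
    _ = _ := finsum_neg (fun i : ℤ => Qp (10*i^2 + (-a)*i + b) * qbin q m ((m-r) - 5*i))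

lemma S_shift (m r a b r' a' b' : ℤ) (h1 : r' = r+5) (h2 : a' = a-20) (h3 : b' = b-a+10) :
    S m r a b = S m r' a' b' := by
  subst h1 h2 h3
  unfold S
  calc ∑ᶠ j : ℤ, Qp (10*j^2 + a*j + b) * qbin q m (r - 5*j)
      = ∑ᶠ j : ℤ, (fun i : ℤ => Qp (10*i^2 + (a-20)*i + (b-a+10)) * qbin q m ((r+5) - 5*i)) (j+1) := by
        apply finsum_congr; intro j
        show Qp (10*j^2 + a*j + b) * qbin q m (r - 5*j)
          = Qp (10*(j+1)^2 + (a-20)*(j+1) + (b-a+10)) * qbin q m ((r+5) - 5*(j+1))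
        rw [show 10*(j+1)^2 + (a-20)*(j+1) + (b-a+10) = 10*j^2 + a*j + b by ring,
          show (r+5) - 5*(j+1) = r - 5*j by ring]
    _ = _ := finsum_shift (fun i : ℤ => Qp (10*i^2 + (a-20)*i + (b-a+10)) * qbin q m ((r+5) - 5*i)) 1

set_option maxHeartbeats 4000000 in
lemma key (N : ℤ) (hN : 2 ≤ N) :
    S (2*N) (N) (1) (0) - S (2*N) (N - 3) (11) (3)
      = (1 + Qp (2*N - 1) + Qp (2*N - 2)) * (S (2*N - 2) (N - 1) (1) (0) - S (2*N - 2) (N - 4) (11) (3))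
        - Qp (4*N - 5) * (S (2*N - 4) (N - 2) (1) (0) - S (2*N - 4) (N - 5) (11) (3)) := by
  linear_combination (0:F) - (S_mul (2*N - 1) (2*N - 2) (N - 1) (1) (0) (2*N - 1) (by ring)) + (S_mul (2*N - 1) (2*N - 2) (N - 4) (11) (3) (2*N + 2) (by ring)) - (S_mul (2*N - 2) (2*N - 2) (N - 1) (1) (0) (2*N - 2) (by ring)) + (S_mul (2*N - 2) (2*N - 2) (N - 4) (11) (3) (2*N + 1) (by ring)) + (S_mul (4*N - 5) (2*N - 4) (N - 2) (1) (0) (4*N - 5) (by ring)) - (S_mul (4*N - 5) (2*N - 4) (N - 5) (11) (3) (4*N - 2) (by ring)) + (S_pascalA (2*N) (N) (1) (0) (2*N - 1) (N - 1) (6) (N) (by omega) (by ring) (by ring) (by ring) (by ring)) + (S_pascalB (2*N - 1) (N) (1) (0) (2*N - 2) (N - 1) (-4) (N) (by omega) (by ring) (by ring) (by ring) (by ring)) + (S_pascalA (2*N - 1) (N - 1) (6) (N) (2*N - 2) (N - 2) (11) (2*N) (by omega) (by ring) (by ring) (by ring) (by ring)) - (S_pascalA (2*N) (N - 3) (11)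 (3) (2*N - 1) (N - 4) (16) (N + 6) (by omega) (by ring) (by ring) (by ring) (by ring)) - (S_pascalB (2*N - 1) (N - 3) (11) (3) (2*N - 2) (N - 4) (6) (N) (by omega) (by ring) (by ring) (by ring) (by ring)) - (S_pascalA (2*N - 1) (N - 4) (16) (N + 6) (2*N - 2) (N - 5) (21) (2*N + 9) (by omega) (by ring) (by ring) (by ring) (by ring)) - (S_pascalA (2*N - 2) (N - 1) (1) (2*N - 1) (2*N - 3) (N - 2) (6) (3*N - 2) (by omega) (by ring) (by ring) (by ring) (by ring)) - (S_pascalB (2*N - 3) (N - 1) (1) (2*N - 1) (2*N - 4) (N - 2) (-4) (3*N - 2) (by omega) (by ring) (by ring) (by ring) (by ring)) - (S_pascalA (2*N - 3) (N - 2) (6) (3*N - 2) (2*N - 4) (N - 3) (11) (4*N - 3) (by omega) (by ring) (by ring) (by ring) (by ring)) + (S_pascalA (2*N - 2) (N - 4) (11) (2*N + 2) (2*N - 3) (N - 5) (16) (3*N + 4) (by omega) (by ring) (by ring) (by ring) (by ring)) + (S_pascalB (2*N - 3) (N - 4) (11) (2*N + 2) (2*N - 4) (N - 5) (6) (3*N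 - 2) (by omega) (by ring) (by ring) (by ring) (by ring)) + (S_pascalA (2*N - 3) (N - 5) (16) (3*N + 4) (2*N - 4) (N - 6) (21) (4*N + 6) (by omega) (by ring) (by ring) (by ring) (by ring)) - (S_pascalA (2*N - 2) (N - 1) (1) (2*N - 2) (2*N - 3) (N - 2) (6) (3*N - 3) (by omega) (by ring) (by ring) (by ring) (by ring)) - (S_pascalB (2*N - 3) (N - 1) (1) (2*N - 2) (2*N - 4) (N - 2) (-4) (3*N - 3) (by omega) (by ring) (by ring) (by ring) (by ring)) - (S_pascalA (2*N - 3) (N - 2) (6) (3*N - 3) (2*N - 4) (N - 3) (11) (4*N - 4) (by omega) (by ring) (by ring) (by ring) (by ring)) + (S_pascalA (2*N - 2) (N - 4) (11) (2*N + 1) (2*N - 3) (N - 5) (16) (3*N + 3) (by omega) (by ring) (by ring) (by ring) (by ring)) + (S_pascalB (2*N - 3) (N - 4) (11) (2*N + 1) (2*N - 4) (N - 5) (6) (3*N - 3) (by omega) (by ring) (by ring) (by ring) (by ring)) + (S_pascalA (2*N - 3) (N - 5) (16) (3*N + 3) (2*N - 4) (N - 6) (21) (4*N + 5) (by omega) (by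 ring) (by ring) (by ring) (by ring)) + (S_pascalA (2*N - 2) (N) (-4) (N) (2*N - 3) (N - 1) (1) (2*N - 2) (by omega) (by ring) (by ring) (by ring) (by ring)) + (S_pascalB (2*N - 3) (N) (-4) (N) (2*N - 4) (N - 1) (-9) (2*N) (by omega) (by ring) (by ring) (by ring) (by ring)) + (S_pascalA (2*N - 3) (N - 1) (1) (2*N - 2) (2*N - 4) (N - 2) (6) (3*N - 4) (by omega) (by ring) (by ring) (by ring) (by ring)) + (S_pascalA (2*N - 2) (N - 1) (6) (N) (2*N - 3) (N - 2) (11) (2*N - 1) (by omega) (by ring) (by ring) (by ring) (by ring)) + (S_pascalB (2*N - 3) (N - 1) (6) (N) (2*N - 4) (N - 2) (1) (2*N - 1) (by omega) (by ring) (by ring) (by ring) (by ring)) + (S_pascalA (2*N - 3) (N - 2) (11) (2*N - 1) (2*N - 4) (N - 3) (16) (3*N - 2) (by omega) (by ring) (by ring) (by ring) (by ring)) + (S_pascalA (2*N - 2) (N - 2) (11) (2*N) (2*N - 3) (N - 3) (16) (3*N) (by omega) (by ring) (by ring) (by ring) (by ring)) + (S_pascalB (2*N - 3) (N - 2) (11)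 (2*N) (2*N - 4) (N - 3) (6) (3*N - 2) (by omega) (by ring) (by ring) (by ring) (by ring)) + (S_pascalA (2*N - 3) (N - 3) (16) (3*N) (2*N - 4) (N - 4) (21) (4*N) (by omega) (by ring) (by ring) (by ring) (by ring)) - (S_pascalA (2*N - 2) (N - 3) (6) (N) (2*N - 3) (N - 4) (11) (2*N + 1) (by omega) (by ring) (by ring) (by ring) (by ring)) - (S_pascalB (2*N - 3) (N - 3) (6) (N) (2*N - 4) (N - 4) (1) (2*N - 3) (by omega) (by ring) (by ring) (by ring) (by ring)) - (S_pascalA (2*N - 3) (N - 4) (11) (2*N + 1) (2*N - 4) (N - 5) (16) (3*N + 2) (by omega) (by ring) (by ring) (by ring) (by ring)) - (S_pascalA (2*N - 2) (N - 4) (16) (N + 6) (2*N - 3) (N - 5) (21) (2*N + 8) (by omega) (by ring) (by ring) (by ring) (by ring)) - (S_pascalB (2*N - 3) (N - 4) (16) (N + 6) (2*N - 4) (N - 5) (11) (2*N + 2) (by omega) (by ring) (by ring) (by ring) (by ring)) - (S_pascalA (2*N - 3) (N - 5) (21) (2*N + 8) (2*N - 4) (N - 6) (26) (3*N + 10) (by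 omega) (by ring) (by ring) (by ring) (by ring)) - (S_pascalA (2*N - 2) (N - 5) (21) (2*N + 9) (2*N - 3) (N - 6) (26) (3*N + 12) (by omega) (by ring) (by ring) (by ring) (by ring)) - (S_pascalB (2*N - 3) (N - 5) (21) (2*N + 9) (2*N - 4) (N - 6) (16) (3*N + 4) (by omega) (by ring) (by ring) (by ring) (by ring)) - (S_pascalA (2*N - 3) (N - 6) (26) (3*N + 12) (2*N - 4) (N - 7) (31) (4*N + 15) (by omega) (by ring) (by ring) (by ring) (by ring)) - (S_rel (2*N - 4) (N) (-16) (3*N) (-11) (4*N - 3) (-21) (4*N) (N - 1) (by ring) (by ring) (by ring) (by ring) (by ring)) + (S_rel (2*N - 4) (N - 2) (-6) (3*N - 4) (-1) (4*N - 5) (-11) (4*N - 6) (N - 3) (by ring) (by ring) (by ring) (by ring) (by ring)) - (S_rel (2*N - 4) (N - 2) (6) (3*N - 3) (11) (4*N - 4) (1) (4*N - 5) (N - 3) (by ring) (by ring) (by ring) (by ring) (by ring)) + (S_rel (2*N - 4) (N) (-4) (3*N - 3) (1) (4*N - 6) (-9) (4*N - 3) (N - 1) (by ring) (by ring) (by ring)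 (by ring) (by ring)) - (S_rel (2*N - 4) (N - 1) (-11) (2*N - 1) (-6) (3*N - 3) (-16) (3*N - 2) (N - 2) (by ring) (by ring) (by ring) (by ring) (by ring)) - (S_rel (2*N - 4) (N) (-11) (2*N) (-6) (3*N - 3) (-16) (3*N) (N - 1) (by ring) (by ring) (by ring) (by ring) (by ring)) + (S_rel (2*N - 4) (N - 1) (1) (2*N - 1) (6) (3*N - 3) (-4) (3*N - 2) (N - 2) (by ring) (by ring) (by ring) (by ring) (by ring)) - (S_rel (2*N - 4) (N) (1) (2*N - 3) (6) (3*N - 6) (-4) (3*N - 3) (N - 1) (by ring) (by ring) (by ring) (by ring) (by ring)) + (S_rel (2*N - 4) (N - 4) (9) (2*N + 1) (14) (3*N + 2) (4) (3*N - 3) (N - 5) (by ring) (by ring) (by ring) (by ring) (by ring)) - (S_rel (2*N - 4) (N - 3) (6) (3*N - 3) (11) (4*N - 3) (1) (4*N - 6) (N - 4) (by ring) (by ring) (by ring) (by ring) (by ring)) - (S_rel (2*N - 4) (N) (-6) (3*N - 3) (-1) (4*N - 6) (-11) (4*N - 3) (N - 1) (by ring) (by ring) (by ring) (by ring) (by ring))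 + (S_rel (2*N - 4) (N - 4) (9) (2*N) (14) (3*N + 1) (4) (3*N - 4) (N - 5) (by ring) (by ring) (by ring) (by ring) (by ring)) + (S_rel (2*N - 4) (N - 2) (6) (N) (11) (2*N - 1) (1) (2*N - 2) (N - 3) (by ring) (by ring) (by ring) (by ring) (by ring)) - (S_rel (2*N - 4) (N) (-6) (N) (-1) (2*N - 3) (-11) (2*N) (N - 1) (by ring) (by ring) (by ring) (by ring) (by ring)) + (S_rel (2*N - 4) (N) (-9) (2*N) (-4) (3*N - 3) (-14) (3*N) (N - 1) (by ring) (by ring) (by ring) (by ring) (by ring)) + (S_rel (2*N - 4) (N - 3) (9) (2*N) (14) (3*N) (4) (3*N - 3) (N - 4) (by ring) (by ring) (by ring) (by ring) (by ring)) + (S_rel (2*N - 4) (N - 3) (4) (N) (9) (2*N) (-1) (2*N - 3) (N - 4) (by ring) (by ring) (by ring) (by ring) (by ring)) - (S_shift (2*N - 4) (N - 5) (11) (4*N - 2) (N) (-9) (4*N - 3) (by ring) (by ring) (by ring)) - (S_symm (2*N - 4) (N - 3) (11) (4*N - 3) (N - 1) (-11) (by ring) (by ring)) + (S_symm (2*N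 - 4) (N - 4) (6) (3*N - 2) (N) (-6) (by ring) (by ring)) + (S_shift (2*N - 4) (N - 5) (11) (2*N + 2) (N) (-9) (2*N + 1) (by ring) (by ring) (by ring)) + (S_shift (2*N - 4) (N - 6) (21) (4*N + 6) (N - 1) (1) (4*N - 5) (by ring) (by ring) (by ring)) + (S_shift (2*N - 4) (N - 5) (11) (2*N + 1) (N) (-9) (2*N) (by ring) (by ring) (by ring)) + (S_shift (2*N - 4) (N - 5) (16) (3*N + 3) (N) (-4) (3*N - 3) (by ring) (by ring) (by ring)) + (S_shift (2*N - 4) (N - 6) (21) (4*N + 5) (N - 1) (1) (4*N - 6) (by ring) (by ring) (by ring)) + (S_symm (2*N - 4) (N - 2) (6) (3*N - 4) (N - 2) (-6) (by ring) (by ring)) + (S_symm (2*N - 4) (N - 2) (11) (2*N - 1) (N - 2) (-11) (by ring) (by ring)) + (S_symm (2*N - 4) (N - 3) (16) (3*N - 2) (N - 1) (-16) (by ring) (by ring)) + (S_symm (2*N - 4) (N - 3) (11) (2*N) (N - 1) (-11) (by ring) (by ring)) + (S_symm (2*N - 4) (N - 3) (16) (3*N) (N - 1) (-16) (by ring) (by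 ring)) + (S_symm (2*N - 4) (N - 4) (21) (4*N) (N) (-21) (by ring) (by ring)) - (S_symm (2*N - 4) (N - 3) (1) (2*N - 3) (N - 1) (-1) (by ring) (by ring)) - (S_symm (2*N - 4) (N - 4) (6) (N) (N) (-6) (by ring) (by ring)) - (S_symm (2*N - 4) (N - 4) (11) (2*N + 1) (N) (-11) (by ring) (by ring)) - (S_shift (2*N - 4) (N - 5) (16) (3*N + 2) (N) (-4) (3*N - 4) (by ring) (by ring) (by ring)) - (S_symm (2*N - 4) (N - 4) (11) (2*N + 2) (N) (-11) (by ring) (by ring)) - (S_shift (2*N - 4) (N - 5) (16) (N + 6) (N) (-4) (N) (by ring) (by ring) (by ring)) - (S_shift (2*N - 4) (N - 5) (21) (2*N + 8) (N) (1) (2*N - 3) (by ring) (by ring) (by ring)) - (S_shift (2*N - 4) (N - 6) (26) (3*N + 10) (N - 1) (6) (3*N - 6) (by ring) (by ring) (by ring)) - (S_shift (2*N - 4) (N - 6) (21) (2*N + 9) (N - 1) (1) (2*N - 2) (by ring) (by ring) (by ring)) - (S_shift (2*N - 4) (N - 6) (26) (3*N + 12) (N - 1) (6) (3*N - 4) (by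 ring) (by ring) (by ring)) - (S_shift (2*N - 4) (N - 7) (31) (4*N + 15) (N - 2) (11) (4*N - 6) (by ring) (by ring) (by ring)) - (S_symm (2*N - 4) (N - 3) (-1) (4*N - 5) (N - 1) (1) (by ring) (by ring)) + (S_symm (2*N - 4) (N - 3) (-6) (3*N - 4) (N - 1) (6) (by ring) (by ring)) - (S_symm (2*N - 4) (N - 2) (6) (3*N - 3) (N - 2) (-6) (by ring) (by ring)) - (S_symm (2*N - 4) (N - 4) (9) (2*N + 1) (N) (-9) (by ring) (by ring)) - (S_shift (2*N - 4) (N - 5) (14) (3*N + 2) (N) (-6) (3*N - 2) (by ring) (by ring) (by ring)) + (S_symm (2*N - 4) (N - 4) (4) (3*N - 3) (N) (-4) (by ring) (by ring)) + (S_shift (2*N - 4) (N - 5) (9) (2*N + 1) (N) (-11) (2*N + 2) (by ring) (by ring) (by ring)) + (S_symm (2*N - 4) (N - 4) (11) (4*N - 3) (N) (-11) (by ring) (by ring)) - (S_symm (2*N - 4) (N - 3) (1) (4*N - 6) (N - 1) (-1) (by ring) (by ring)) - (S_shift (2*N - 4) (N - 5) (14) (3*N + 1) (N) (-6) (3*N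 - 3) (by ring) (by ring) (by ring)) + (S_symm (2*N - 4) (N - 4) (4) (3*N - 4) (N) (-4) (by ring) (by ring)) + (S_shift (2*N - 4) (N - 5) (9) (2*N) (N) (-11) (2*N + 1) (by ring) (by ring) (by ring)) - (S_symm (2*N - 4) (N - 3) (11) (2*N - 1) (N - 1) (-11) (by ring) (by ring)) + (S_symm (2*N - 4) (N - 3) (6) (N) (N - 1) (-6) (by ring) (by ring)) - (S_symm (2*N - 4) (N - 3) (9) (2*N) (N - 1) (-9) (by ring) (by ring)) - (S_symm (2*N - 4) (N - 4) (14) (3*N) (N) (-14) (by ring) (by ring)) + (S_symm (2*N - 4) (N - 3) (4) (3*N - 3) (N - 1) (-4) (by ring) (by ring)) - (S_symm (2*N - 4) (N - 3) (4) (N) (N - 1) (-4) (by ring) (by ring)) - (S_symm (2*N - 4) (N - 4) (9) (2*N) (N) (-9) (by ring) (by ring)) + (S_symm (2*N - 4) (N - 3) (-1) (2*N - 3) (N - 1) (1) (by ring) (by ring)) + (S_symm (2*N - 4) (N - 4) (4) (N) (N) (-4) (by ring) (by ring)) - (S_symm (2*N - 4) (N - 2) (11) (4*N - 6) (N - 2)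 (-11) (by ring) (by ring))

lemma P21_eq (n : ℕ) (M R R3 : ℤ) (hM : M = 2*(n:ℤ)) (hR : R = (n:ℤ)) (h3 : R3 = (n:ℤ)-3) :
    P21 n = S M R 1 0 - S M R3 11 3 := by
  subst hM hR h3
  unfold P21 S
  congr 1
  · apply finsum_congr; intro j
    show q ^ (10*j^2 + j) * qbin q (2*(n:ℤ)) ((n:ℤ) - 5*j)
      = q ^ (10*j^2 + 1*j + 0) * qbin q (2*(n:ℤ)) ((n:ℤ) - 5*j)
    rw [show 10*j^2 + 1*j + 0 = 10*j^2 + j by ring]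
  · apply finsum_congr; intro j
    show q ^ (10*j^2 + 11*j + 3) * qbin q (2*(n:ℤ)) ((n:ℤ) - 5*j - 3)
      = q ^ (10*j^2 + 11*j + 3) * qbin q (2*(n:ℤ)) (((n:ℤ)-3) - 5*j)
    rw [show (n:ℤ) - 3 - 5*j = (n:ℤ) - 5*j - 3 by ring]

lemma P21_zero : P21 0 = 1 := by
  unfold P21
  have h1 : (∑ᶠ j : ℤ, q ^ (10*j^2 + j) * qbin q (2*((0:ℕ):ℤ)) (((0:ℕ):ℤ) - 5*j)) = 1 := by
    have hz : ∀ j : ℤ, j ≠ 0 → q ^ (10*j^2 + j) * qbin q (2*((0:ℕ):ℤ)) (((0:ℕ):ℤ) - 5*j) = 0 := by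
      intro j hj
      rw [qbin_out (by push_cast; omega), mul_zero]
    rw [finsum_eq_single _ 0 hz]
    norm_num
    exact qbin_zero_right le_rfl
  have h2 : (∑ᶠ j : ℤ, q ^ (10*j^2 + 11*j + 3) * qbin q (2*((0:ℕ):ℤ)) (((0:ℕ):ℤ) - 5*j - 3)) = 0 := by
    apply finsum_eq_zero_of_forall_eq_zero
    intro j
    rw [qbin_out (by push_cast; omega), mul_zero]
  rw [h1, h2]
  ring

lemma qbin_two_one : qbin q 2 1 = 1 + q := by
  rw [qbin_in (by norm_num) (by norm_num)]
  show pq q 2 / (pq q 1 * pq q 1) = 1 + q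
  have e1 : pq q 1 = 1 - q ^ 1 := by rw [show (1:ℕ) = 0+1 from rfl, pq_succ 0, pq_zero, one_mul]
  have e2 : pq q 2 = pq q 1 * (1 - q^2) := pq_succ 1
  have h1 : pq q 1 ≠ 0 := pq_ne_zero 1
  rw [e2, div_eq_iff (mul_ne_zero h1 h1), e1]
  ring

lemma P21_one : P21 1 = 1 + q := by
  unfold P21
  have h1 : (∑ᶠ j : ℤ, q ^ (10*j^2 + j) * qbin q (2*((1:ℕ):ℤ)) (((1:ℕ):ℤ) - 5*j)) = 1 + q := by
    have hz : ∀ j : ℤ, j ≠ 0 → q ^ (10*j^2 + j) * qbin q (2*((1:ℕ):ℤ)) (((1:ℕ):ℤ) - 5*j) = 0 := by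
      intro j hj
      rw [qbin_out (by push_cast; omega), mul_zero]
    rw [finsum_eq_single _ 0 hz]
    norm_num
    exact qbin_two_one
  have h2 : (∑ᶠ j : ℤ, q ^ (10*j^2 + 11*j + 3) * qbin q (2*((1:ℕ):ℤ)) (((1:ℕ):ℤ) - 5*j - 3)) = 0 := by
    apply finsum_eq_zero_of_forall_eq_zero
    intro j
    rw [qbin_out (by push_cast; omega), mul_zero]
  rw [h1, h2]
  ring

lemma Qp_natCast (c : ℕ) : q ^ c = Qp ((c:ℤ)) := (zpow_natCast q c).symm


theorem stmt7 :
    (∀ n : ℕ, 2 ≤ n →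
        P21 n = (1 + q ^ (2 * n - 1) + q ^ (2 * n - 2)) * P21 (n - 1)
          - q ^ (4 * n - 5) * P21 (n - 2)) ∧
      P21 0 = 1 ∧ P21 1 = 1 + q := by
  refine ⟨?_, P21_zero, P21_one⟩
  intro n hn
  obtain ⟨m, rfl⟩ : ∃ m, n = m + 2 := ⟨n - 2, by omega⟩
  set N : ℤ := (m : ℤ) + 2 with hNdef
  rw [show m + 2 - 1 = m + 1 by omega, show m + 2 - 2 = m by omega]
  rw [P21_eq (m+2) (2*N) (N) (N - 3) (by omega) (by omega) (by omega),
    P21_eq (m+1) (2*N - 2) (N - 1) (N - 4) (by omega) (by omega) (by omega),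
    P21_eq m (2*N - 4) (N - 2) (N - 5) (by omega) (by omega) (by omega)]
  rw [show 2*(m+2) - 1 = 2*m + 3 by omega, show 2*(m+2) - 2 = 2*m + 2 by omega,
    show 4*(m+2) - 5 = 4*m + 3 by omega]
  rw [Qp_natCast (2*m+3), Qp_natCast (2*m+2), Qp_natCast (4*m+3)]
  rw [show (((2*m+3 : ℕ)):ℤ) = 2*N - 1 by omega, show (((2*m+2 : ℕ)):ℤ) = 2*N - 2 by omega,
    show (((4*m+3 : ℕ)):ℤ) = 4*N - 5 by omega]
  exact key N (by omega)
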